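/- Let κ > 0, C₀ ≠ 0, and let (w,v) solve w' = κ(1−v) + C₀² v⁻³, v' = w on a maximal interval with v(0) > 0. Then the quantity w² + κ(1−v)² + C₀²v⁻² is conserved, and consequently v(t) stays bounded above and bounded away from 0, and w(t) is bounded, for all t ≥ 0. -/

import Mathlib

open Set

/-- For `w' = κ(1−v) + C₀²v⁻³`, `v' = w` with `v(0) > 0` and `C₀ ≠ 0`: the energy
`w² + κ(1−v)² + C₀²v⁻²` is conserved, and `v` stays bounded above and away from `0`,
and `w` stays bounded, for all `t ≥ 0`. -/
theorem stmt_14 (κ C₀ : ℝ) (hκ : 0 < κ) (hC₀ : C₀ ≠ 0) (w v : ℝ → ℝ)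
    (hv0 : 0 < v 0)
    (hw : ∀ t ≥ (0:ℝ), HasDerivAt w (κ * (1 - v t) + C₀^2 / (v t)^3) t)
    (hv : ∀ t ≥ (0:ℝ), HasDerivAt v (w t) t) :
    (∀ t ≥ (0:ℝ), (w t)^2 + κ * (1 - v t)^2 + C₀^2 / (v t)^2
        = (w 0)^2 + κ * (1 - v 0)^2 + C₀^2 / (v 0)^2) ∧
    ∃ m M W : ℝ, 0 < m ∧ ∀ t ≥ (0:ℝ), m ≤ v t ∧ v t ≤ M ∧ |w t| ≤ W := by
  set E : ℝ → ℝ := fun t => (w t)^2 + κ * (1 - v t)^2 + C₀^2 / (v t)^2 with hE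
  have hEt' : ∀ t, E t = (w t)^2 + κ * (1 - v t)^2 + C₀^2 / (v t)^2 := fun t => rfl
  clear_value E
  have hE0pos : 0 < E 0 := by
    have h0 : 0 < C₀^2 / (v 0)^2 := div_pos (by positivity) (by positivity)
    have h1 : 0 ≤ (w 0)^2 := sq_nonneg _
    have h2 : 0 ≤ κ * (1 - v 0)^2 := by positivity
    rw [hEt']; linarith
  -- derivative of energy is zero where v > 0
  have hderiv : ∀ t ≥ (0:ℝ), 0 < v t → HasDerivAt E 0 t := by
    intro t ht hvt
    have h1 := (hw t ht).pow 2
    have h2 : HasDerivAt (fun t => κ * (1 - v t)^2)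
        (κ * (2 * (1 - v t)^(2-1) * (0 - w t))) t :=
      (((hasDerivAt_const t (1:ℝ)).sub (hv t ht)).pow 2).const_mul κ
    have h3 : HasDerivAt (fun t => C₀^2 / (v t)^2)
        ((0 * (v t)^2 - C₀^2 * (2 * (v t)^(2-1) * w t)) / ((v t)^2)^2) t :=
      (hasDerivAt_const t (C₀^2)).div ((hv t ht).pow 2) (by positivity)
    have hsum := (h1.add h2).add h3
    convert hsum using 1
    · rfl
    · rfl
    · rw [hE]; rfl
    have hvne : v t ≠ 0 := ne_of_gt hvt
    field_simp
    ring
  -- conservation on intervals where v > 0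
  have hcons : ∀ t ≥ (0:ℝ), (∀ s ∈ Icc (0:ℝ) t, 0 < v s) → E t = E 0 := by
    intro t ht hpos
    have hcont : ContinuousOn E (Icc 0 t) := fun s hs =>
      ((hderiv s hs.1 (hpos s hs)).continuousAt).continuousWithinAt
    have hd : ∀ s ∈ Ico (0:ℝ) t, HasDerivWithinAt E 0 (Ici s) s := fun s hs =>
      (hderiv s hs.1 (hpos s ⟨hs.1, hs.2.le⟩)).hasDerivWithinAt
    exact constant_of_has_deriv_right_zero hcont hd t (right_mem_Icc.2 ht)
  set m := |C₀| / Real.sqrt (E 0) with hm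
  have hsp : 0 < Real.sqrt (E 0) := Real.sqrt_pos.2 hE0pos
  have hmpos : 0 < m := div_pos (abs_pos.2 hC₀) hsp
  have hmle : ∀ x : ℝ, 0 < x → C₀^2 / x^2 ≤ E 0 → m ≤ x := by
    intro x hx hle
    have hs : Real.sqrt (E 0) ^ 2 = E 0 := Real.sq_sqrt hE0pos.le
    have h1 : C₀^2 ≤ E 0 * x^2 := by
      rw [div_le_iff₀ (by positivity)] at hle; linarith
    have h2 : |C₀| ≤ Real.sqrt (E 0) * x := by
      nlinarith [abs_nonneg C₀, sq_abs C₀, mul_pos hsp hx, sq_nonneg (|C₀| - Real.sqrt (E 0) * x)]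
    rw [hm, div_le_iff₀ hsp]
    linarith
  -- positivity of v on [0, ∞)
  have hposAll : ∀ t ≥ (0:ℝ), 0 < v t := by
    by_contra hcon
    push_neg at hcon
    obtain ⟨t0, ht0, hvt0⟩ := hcon
    set B : Set ℝ := {t | 0 ≤ t ∧ v t ≤ 0} with hB
    have hBne : B.Nonempty := ⟨t0, ht0, hvt0⟩
    have hBbd : BddBelow B := ⟨0, fun x hx => hx.1⟩
    set T := sInf B with hT
    have hT0 : 0 ≤ T := le_csInf hBne fun x hx => hx.1
    have hvpos_lt : ∀ s, 0 ≤ s → s < T → 0 < v s := by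
      intro s hs hsT
      by_contra hns
      push_neg at hns
      exact absurd (csInf_le hBbd ⟨hs, hns⟩) (not_le.2 hsT)
    have hc : ContinuousAt v T := (hv T hT0).continuousAt
    by_cases hvT : 0 < v T
    · obtain ⟨ε, hε, hball⟩ := Metric.mem_nhds_iff.1
        (hc.preimage_mem_nhds (Ioi_mem_nhds hvT))
      obtain ⟨b, hbB, hblt⟩ := Real.lt_sInf_add_pos hBne hε
      have hbT : T ≤ b := csInf_le hBbd hbB
      have : v b > 0 := hball (by
        rw [Metric.mem_ball, Real.dist_eq, abs_lt]
        constructor <;> linarith)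
      linarith [hbB.2]
    · push_neg at hvT
      have hTpos : 0 < T := by
        rcases lt_or_eq_of_le hT0 with h | h
        · exact h
        · exfalso; rw [← h] at hvT; linarith
      have hmlo : ∀ s ∈ Ioo (0:ℝ) T, m ≤ v s := by
        intro s hs
        have hposIcc : ∀ u ∈ Icc (0:ℝ) s, 0 < v u := fun u hu =>
          hvpos_lt u hu.1 (lt_of_le_of_lt hu.2 hs.2)
        have hEs := hcons s hs.1.le hposIcc
        have hvs : 0 < v s := hposIcc s ⟨hs.1.le, le_refl _⟩
        apply hmle _ hvs
        rw [hEt'] at hEs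
        nlinarith [sq_nonneg (w s), mul_nonneg hκ.le (sq_nonneg (1 - v s))]
      have htend : Filter.Tendsto v (nhdsWithin T (Iio T)) (nhds (v T)) :=
        hc.continuousWithinAt.tendsto
      have hev : ∀ᶠ s in nhdsWithin T (Iio T), m ≤ v s :=
        Filter.eventually_of_mem (Ioo_mem_nhdsLT_of_mem ⟨hTpos, le_refl T⟩)
          (fun s hs => hmlo s hs)
      have : m ≤ v T := ge_of_tendsto htend hev
      linarith
  have hEcons : ∀ t ≥ (0:ℝ), E t = E 0 := fun t ht =>
    hcons t ht (fun s hs => hposAll s hs.1)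
  constructor
  · intro t ht
    have := hEcons t ht
    rw [hEt', hEt'] at this
    exact this
  refine ⟨m, 1 + Real.sqrt (E 0 / κ), Real.sqrt (E 0), hmpos, ?_⟩
  intro t ht
  have hEt := hEcons t ht
  rw [hEt'] at hEt
  have hvt := hposAll t ht
  have hnn1 : 0 ≤ C₀^2 / (v t)^2 := by positivity
  have hnn2 : 0 ≤ κ * (1 - v t)^2 := by positivity
  have hnn3 : 0 ≤ (w t)^2 := sq_nonneg _
  refine ⟨?_, ?_, ?_⟩
  · exact hmle _ hvt (by linarith)
  · have h2 : (1 - v t)^2 ≤ E 0 / κ := by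
      rw [le_div_iff₀ hκ]; nlinarith
    have := Real.sqrt_le_sqrt h2
    rw [Real.sqrt_sq_eq_abs] at this
    linarith [neg_le_abs (1 - v t)]
  · have h2 : (w t)^2 ≤ E 0 := by linarith
    have := Real.sqrt_le_sqrt h2
    rw [Real.sqrt_sq_eq_abs] at this
    exact this
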